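/- The coefficient of t^{n-1-m} in the polynomial part P_A(t) equals (-1)^m / ((n-1-m)! * a_1 ⋯ a_n) times the coefficient of z^m in the product B(a_1 z) ⋯ B(a_n z), where B(z) = z/(e^z - 1). -/

import Mathlib

open PowerSeries

/-- The restricted partition function. -/
noncomputable def restrictedPartition (n : ℕ) (a : Fin n → ℕ) (t : ℕ) : ℕ :=
  Nat.card {m : Fin n → ℕ // ∑ i, m i * a i = t}

/-- The Bernoulli exponential generating function `B(z) = z/(e^z - 1)` over `ℂ`. -/
noncomputable def bernoulliPS : PowerSeries ℂ :=
  PowerSeries.mk fun k => (bernoulli k : ℂ) / k.factorial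

namespace PolyPartAux
open Polynomial

noncomputable section

def w0 : PowerSeries ℂ := PowerSeries.rescale (-1) (PowerSeries.exp ℂ)

def v0 : PowerSeries ℂ := PowerSeries.mk fun k => (-1)^k / (k+1).factorial

lemma constCoeff_w0 : PowerSeries.constantCoeff (R := ℂ) w0 = 1 := by
  simp [w0, ← PowerSeries.coeff_zero_eq_constantCoeff, PowerSeries.coeff_rescale, PowerSeries.exp]

lemma constCoeff_v0 : PowerSeries.constantCoeff (R := ℂ) v0 = 1 := by
  simp [v0, ← PowerSeries.coeff_zero_eq_constantCoeff]

lemma X_mul_v0 : PowerSeries.X * v0 = 1 - w0 := by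
  ext k
  cases k with
  | zero => simp [PowerSeries.coeff_zero_eq_constantCoeff, constCoeff_w0]
  | succ k =>
      rw [PowerSeries.coeff_succ_X_mul]
      simp [v0, w0, PowerSeries.coeff_rescale, PowerSeries.exp, PowerSeries.coeff_mk,
        PowerSeries.coeff_one, pow_succ]
      ring

lemma deriv_exp : d⁄dX ℂ (PowerSeries.exp ℂ) = PowerSeries.exp ℂ := by
  ext n
  have h : ((n+1).factorial : ℂ) = (n+1) * n.factorial := by exact_mod_cast Nat.factorial_succ n
  have h1 : ((n:ℂ)+1) ≠ 0 := by exact_mod_cast Nat.succ_ne_zero n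
  have h2 : ((n.factorial : ℂ)) ≠ 0 := by exact_mod_cast n.factorial_ne_zero
  simp [PowerSeries.coeff_derivative, PowerSeries.exp, h]
  field_simp

lemma deriv_rescale (b : ℂ) (f : PowerSeries ℂ) :
    d⁄dX ℂ (PowerSeries.rescale b f) = PowerSeries.C (R := ℂ) b * PowerSeries.rescale b (d⁄dX ℂ f) := by
  ext n
  simp [PowerSeries.coeff_derivative, PowerSeries.coeff_rescale, PowerSeries.coeff_C_mul, pow_succ]
  ring

lemma deriv_w0 : d⁄dX ℂ w0 = -w0 := by
  rw [w0, deriv_rescale, deriv_exp]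
  rw [map_neg, map_one, neg_one_mul]

lemma X_mul_deriv_v0 : PowerSeries.X * d⁄dX ℂ v0 = w0 - v0 := by
  have h := congrArg (d⁄dX ℂ) X_mul_v0
  rw [Derivation.leibniz] at h
  simp only [smul_eq_mul, PowerSeries.derivative_X, mul_one, map_sub, deriv_w0] at h
  have h1 : d⁄dX ℂ (1 : PowerSeries ℂ) = 0 := by simpa using (d⁄dX ℂ).map_one_eq_zero
  rw [h1] at h
  -- h : X * d⁄dX v0 + v0 * 1 = 0 - -w0  (roughly)
  linear_combination h


lemma w0_def : w0 = PowerSeries.rescale (-1) (PowerSeries.exp ℂ) := rfl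

lemma bPS_eq : bernoulliPS = bernoulliPowerSeries ℂ := by
  ext n
  simp [bernoulliPS, bernoulliPowerSeries, PowerSeries.coeff_mk]

lemma resB_mul_v0 : PowerSeries.rescale (-1) bernoulliPS * v0 = 1 := by
  have h := bernoulliPowerSeries_mul_exp_sub_one ℂ
  have h2 := congrArg (PowerSeries.rescale (-1 : ℂ)) h
  rw [map_mul, map_sub, map_one, PowerSeries.rescale_X] at h2
  have hu : PowerSeries.rescale (-1 : ℂ) (PowerSeries.exp ℂ) - 1 = -(PowerSeries.X * v0) := by
    rw [X_mul_v0]; unfold w0; ring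
  rw [hu, ← bPS_eq] at h2
  have h3 : PowerSeries.X * (PowerSeries.rescale (-1) bernoulliPS * v0) = PowerSeries.X * 1 := by
    rw [mul_one]
    have : PowerSeries.C (R := ℂ) (-1) * PowerSeries.X = -PowerSeries.X := by
      rw [map_neg, map_one, neg_one_mul]
    rw [this] at h2
    linear_combination -h2
  exact mul_left_cancel₀ PowerSeries.X_ne_zero h3

lemma resB_mul_resv0 (b : ℂ) :
    PowerSeries.rescale (-b) bernoulliPS * PowerSeries.rescale b v0 = 1 := by
  have h := congrArg (PowerSeries.rescale b) resB_mul_v0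
  rw [map_mul, map_one, PowerSeries.rescale_rescale] at h
  rw [show -b = -1 * b by ring]
  exact h

lemma constCoeff_aeval (q : Polynomial ℂ) (f : PowerSeries ℂ) :
    PowerSeries.constantCoeff (R := ℂ) (Polynomial.aeval f q) =
      Polynomial.eval (PowerSeries.constantCoeff (R := ℂ) f) q := by
  rw [Polynomial.aeval_def, Polynomial.hom_eval₂]
  have h : (PowerSeries.constantCoeff (R := ℂ)).comp (algebraMap ℂ (PowerSeries ℂ)) = RingHom.id ℂ := by
    ext c; simp [PowerSeries.algebraMap_apply]
  rw [h]
  rfl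

lemma deriv_aeval (q : Polynomial ℂ) (f : PowerSeries ℂ) :
    d⁄dX ℂ (Polynomial.aeval f q) = Polynomial.aeval f (derivative q) * d⁄dX ℂ f := by
  induction q using Polynomial.induction_on' with
  | add p q hp hq => simp only [map_add, hp, hq]; ring
  | monomial k c =>
      rw [Polynomial.aeval_monomial, Polynomial.derivative_monomial]
      rw [Derivation.leibniz, Derivation.leibniz_pow]
      have : d⁄dX ℂ ((algebraMap ℂ (PowerSeries ℂ)) c) = 0 := by
        simp [PowerSeries.algebraMap_apply]
      rw [this]
      cases k with
      | zero => simp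
      | succ k =>
          simp only [map_mul, Polynomial.aeval_C, Polynomial.aeval_X, map_natCast, smul_eq_mul]
          push_cast
          rw [Polynomial.aeval_monomial]
          push_cast
          ring
def Om (μ : ℂ) : ℕ → Polynomial ℂ
  | 0 => 1
  | N+1 => Polynomial.X * ((1 - Polynomial.C μ * Polynomial.X) * derivative (Om μ N)
      + Polynomial.C (μ * (N+1)) * Om μ N)

lemma mk_tmul (c : ℕ → ℂ) :
    PowerSeries.mk (fun t => (t : ℂ) * c t) = PowerSeries.X * d⁄dX ℂ (PowerSeries.mk c) := by
  ext k
  cases k with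
  | zero => simp
  | succ k =>
      rw [PowerSeries.coeff_succ_X_mul, PowerSeries.coeff_derivative]
      simp [PowerSeries.coeff_mk]
      ring

lemma geom (μ : ℂ) :
    (1 - PowerSeries.C (R := ℂ) μ * PowerSeries.X) * PowerSeries.mk (fun t => μ ^ t) = 1 := by
  ext k
  rw [sub_mul, one_mul]
  cases k with
  | zero => simp
  | succ k =>
      rw [map_sub, mul_assoc]
      rw [PowerSeries.coeff_C_mul, PowerSeries.coeff_succ_X_mul]
      simp [PowerSeries.coeff_mk, pow_succ, PowerSeries.coeff_one]
      ring

lemma OmW (μ : ℂ) (N : ℕ) :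
    (((1 - Polynomial.C μ * Polynomial.X) ^ (N+1) : Polynomial ℂ) : PowerSeries ℂ) *
      PowerSeries.mk (fun t => (t : ℂ) ^ N * μ ^ t) = ((Om μ N : Polynomial ℂ) : PowerSeries ℂ) := by
  induction N with
  | zero =>
      have h : PowerSeries.mk (fun t => (t : ℂ) ^ 0 * μ ^ t) = PowerSeries.mk (fun t => μ ^ t) := by
        ext t; simp
      rw [h, pow_one]
      push_cast [Polynomial.coe_sub, Polynomial.coe_mul, Polynomial.coe_one, Polynomial.coe_C,
        Polynomial.coe_X]
      rw [Om]
      push_cast [Polynomial.coe_one]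
      exact geom μ
  | succ N IH =>
      have hLexp : ((1 - Polynomial.C μ * Polynomial.X : Polynomial ℂ) : PowerSeries ℂ)
          = 1 - PowerSeries.C (R := ℂ) μ * PowerSeries.X := by
        push_cast [Polynomial.coe_sub, Polynomial.coe_mul, Polynomial.coe_one, Polynomial.coe_C,
          Polynomial.coe_X]
        rfl
      set L : PowerSeries ℂ := 1 - PowerSeries.C (R := ℂ) μ * PowerSeries.X with hL
      set mkN : PowerSeries ℂ := PowerSeries.mk (fun t => (t : ℂ) ^ N * μ ^ t) with hmkN
      have hmkS : PowerSeries.mk (fun t => (t : ℂ) ^ (N+1) * μ ^ t)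
          = PowerSeries.X * d⁄dX ℂ mkN := by
        rw [hmkN, ← mk_tmul]
        ext t; simp [PowerSeries.coeff_mk]; ring
      have hcoepow : ∀ k : ℕ, (((1 - Polynomial.C μ * Polynomial.X) ^ k : Polynomial ℂ) :
          PowerSeries ℂ) = L ^ k := by
        intro k; rw [Polynomial.coe_pow, hLexp]
      rw [hcoepow] at IH
      have hd := congrArg (d⁄dX ℂ) IH
      rw [Derivation.leibniz, Derivation.leibniz_pow] at hd
      have hDL : d⁄dX ℂ L = -(PowerSeries.C (R := ℂ) μ) := by
        rw [hL, map_sub]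
        simp
      have hDOm : d⁄dX ℂ ((Om μ N : Polynomial ℂ) : PowerSeries ℂ)
          = ((derivative (Om μ N) : Polynomial ℂ) : PowerSeries ℂ) :=
        PowerSeries.derivative_coe _
      rw [hDL, hDOm] at hd
      simp only [smul_eq_mul, nsmul_eq_mul, Nat.add_sub_cancel] at hd
      push_cast at hd
      -- hd : L^(N+1) * D mkN + mkN * ((N+1) * L^N * (-C μ)) = coe (derivative (Om μ N))
      rw [hcoepow, hmkS]
      have hOm : ((Om μ (N+1) : Polynomial ℂ) : PowerSeries ℂ)
          = PowerSeries.X * (L * ((derivative (Om μ N) : Polynomial ℂ) : PowerSeries ℂ)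
            + PowerSeries.C (R := ℂ) (μ * (N+1)) * ((Om μ N : Polynomial ℂ) : PowerSeries ℂ)) := by
        rw [show Om μ (N+1) = Polynomial.X * ((1 - Polynomial.C μ * Polynomial.X) *
            derivative (Om μ N) + Polynomial.C (μ * (N+1)) * Om μ N) from rfl]
        push_cast [Polynomial.coe_mul, Polynomial.coe_add, Polynomial.coe_X, Polynomial.coe_C,
          hLexp]
        rfl
      rw [hOm, ← IH]
      have hC : PowerSeries.C (R := ℂ) (μ * (N+1)) = PowerSeries.C (R := ℂ) μ * ((N : PowerSeries ℂ) + 1) := by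
        rw [map_mul]
        congr 1
        push_cast
        simp
      rw [hC]
      linear_combination (PowerSeries.X * L) * hd

lemma OmM (N : ℕ) : ∃ ρ : PowerSeries ℂ,
    Polynomial.aeval w0 (Om 1 N) = v0 ^ (N+1) *
      (PowerSeries.C (R := ℂ) (N.factorial : ℂ) + PowerSeries.X ^ (N+1) * ρ) := by
  induction N with
  | zero =>
      have hv : v0 * v0⁻¹ = 1 := PowerSeries.mul_inv_cancel v0 (by rw [constCoeff_v0]; exact one_ne_zero)
      have hc : PowerSeries.constantCoeff (R := ℂ) (v0⁻¹ - 1) = 0 := by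
        have : PowerSeries.constantCoeff (R := ℂ) (v0 * v0⁻¹) = 1 := by rw [hv]; simp
        rw [map_mul, constCoeff_v0, one_mul] at this
        simp [this]
      obtain ⟨ρ, hρ⟩ := PowerSeries.X_dvd_iff.2 hc
      refine ⟨ρ, ?_⟩
      rw [show Om 1 0 = 1 from rfl]
      simp only [map_one, Nat.factorial_zero, Nat.cast_one, pow_one, zero_add]
      have h2 : (1 : PowerSeries ℂ) + PowerSeries.X * ρ = v0⁻¹ := by
        rw [← hρ]; ring
      rw [h2, hv]
  | succ N IH =>
      obtain ⟨ρ, hρ⟩ := IH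
      refine ⟨-(d⁄dX ℂ ρ), ?_⟩
      have hchain := deriv_aeval (Om 1 N) w0
      rw [deriv_w0] at hchain
      have heval : Polynomial.aeval w0 (Om 1 (N+1)) = w0 * ((1 - w0) *
          Polynomial.aeval w0 (derivative (Om 1 N))
          + ((N : PowerSeries ℂ) + 1) * Polynomial.aeval w0 (Om 1 N)) := by
        rw [show Om 1 (N+1) = Polynomial.X * ((1 - Polynomial.C 1 * Polynomial.X) *
            derivative (Om 1 N) + Polynomial.C ((1:ℂ) * (N+1)) * Om 1 N) from rfl]
        rw [map_mul, map_add, map_mul, map_mul, Polynomial.aeval_X, map_sub, map_one,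
          Polynomial.aeval_C, map_mul, Polynomial.aeval_X]
        push_cast
        simp only [map_one, one_mul, map_add, map_natCast, map_one]
      have hDρ := congrArg (d⁄dX ℂ) hρ
      rw [Derivation.leibniz, Derivation.leibniz_pow] at hDρ
      simp only [smul_eq_mul, nsmul_eq_mul, Nat.add_sub_cancel, map_add, Derivation.leibniz,
        PowerSeries.derivative_C, smul_eq_mul, mul_zero, add_zero, Derivation.leibniz_pow,
        PowerSeries.derivative_X, mul_one] at hDρ
      push_cast at hDρ
      -- hDρ : D(aeval (Om 1 N)) = v0^{N+1} * (X^{N+1} * Dρ + ρ * ((N+1) * X^N)) + φ*(N+1)v0^N Dv0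
      have hfac : ((N+1).factorial : ℂ) = (N+1) * N.factorial := by
        exact_mod_cast Nat.factorial_succ N
      have hCfac : PowerSeries.C (R := ℂ) (((N+1).factorial : ℂ))
          = ((N : PowerSeries ℂ) + 1) * PowerSeries.C (R := ℂ) (N.factorial : ℂ) := by
        rw [hfac, map_mul]
        congr 1
        push_cast
        simp
      have hw0 : w0 = PowerSeries.X * d⁄dX ℂ v0 + v0 := by
        rw [X_mul_deriv_v0]; ring
      rw [heval, hCfac]
      rw [← X_mul_v0]
      calc w0 * ((PowerSeries.X * v0) * Polynomial.aeval w0 (derivative (Om 1 N))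
            + ((N : PowerSeries ℂ) + 1) * Polynomial.aeval w0 (Om 1 N))
          = (PowerSeries.X * v0) * (w0 * Polynomial.aeval w0 (derivative (Om 1 N)))
            + ((N : PowerSeries ℂ) + 1) * w0 * Polynomial.aeval w0 (Om 1 N) := by ring
        _ = (PowerSeries.X * v0) * (-(d⁄dX ℂ (Polynomial.aeval w0 (Om 1 N))))
            + ((N : PowerSeries ℂ) + 1) * w0 * Polynomial.aeval w0 (Om 1 N) := by
            rw [hchain]; ring
        _ = v0 ^ (N+1+1) * (((N : PowerSeries ℂ) + 1) * PowerSeries.C (R := ℂ) (N.factorial : ℂ)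
            + PowerSeries.X ^ (N+1+1) * -(d⁄dX ℂ ρ)) := by
            rw [hDρ, hρ, hw0]
            ring
def ind (k : ℕ) : PowerSeries ℂ := PowerSeries.mk fun s => if k ∣ s then (1 : ℂ) else 0

lemma invFactor (k : ℕ) (hk : 0 < k) : (1 - PowerSeries.X ^ k) * ind k = 1 := by
  ext t
  rw [sub_mul, one_mul, map_sub]
  rcases lt_or_ge t k with h | h
  · have hX : PowerSeries.coeff (R := ℂ) t (PowerSeries.X ^ k * ind k) = 0 := by
      rw [PowerSeries.coeff_X_pow_mul']
      simp [Nat.not_le.2 h]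
    rw [hX, sub_zero]
    rcases Nat.eq_zero_or_pos t with rfl | ht
    · simp [ind, Nat.dvd_zero]
    · have : ¬ (k ∣ t) := fun hd => absurd (Nat.le_of_dvd ht hd) (Nat.not_le.2 h)
      simp [ind, this, PowerSeries.coeff_one]
      omega
  · obtain ⟨d, rfl⟩ : ∃ d, t = d + k := ⟨t - k, by omega⟩
    rw [PowerSeries.coeff_X_pow_mul]
    have hdvd : k ∣ d + k ↔ k ∣ d := by
      constructor
      · intro h1; have := Nat.dvd_sub h1 dvd_rfl; simpa using this
      · intro h1; exact Nat.dvd_add h1 dvd_rfl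
    have hne : d + k ≠ 0 := by omega
    simp [ind, hdvd, PowerSeries.coeff_one, hne]
    omega

lemma coeff_prod_ind (n : ℕ) (a : Fin n → ℕ) (ha : ∀ i, 0 < a i) (t : ℕ) :
    PowerSeries.coeff (R := ℂ) t (∏ i, ind (a i)) = (restrictedPartition n a t : ℂ) := by
  classical
  rw [PowerSeries.coeff_prod]
  simp only [ind, PowerSeries.coeff_mk]
  have hone : ∀ (l : Fin n →₀ ℕ), (∏ i, if a i ∣ l i then (1:ℂ) else 0)
      = if (∀ i, a i ∣ l i) then (1:ℂ) else 0 := fun l => by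
    rw [Finset.prod_boole]
    simp
  rw [Finset.sum_congr rfl fun l _ => hone l, Finset.sum_boole]
  congr 1
  rw [restrictedPartition]
  -- build an equiv
  set F := (Finset.finsuppAntidiag (Finset.univ : Finset (Fin n)) t).filter
      (fun l => ∀ i, a i ∣ l i) with hF
  have : Nat.card {m : Fin n → ℕ // ∑ i, m i * a i = t} = F.card := by
    rw [← Nat.card_eq_finsetCard]
    apply Nat.card_congr
    refine ⟨fun m => ⟨Finsupp.equivFunOnFinite.symm (fun i => (m : Fin n → ℕ) i * a i), ?_⟩,
      fun l => ⟨fun i => (l : Fin n →₀ ℕ) i / a i, ?_⟩, ?_, ?_⟩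
    · obtain ⟨m, hm⟩ := m
      simp only [hF, Finset.mem_filter, Finset.mem_finsuppAntidiag]
      refine ⟨⟨?_, ?_⟩, ?_⟩
      · rw [← hm]
        exact Finset.sum_congr rfl (fun i _ => rfl)
      · exact Finset.subset_univ _
      · intro i
        simp only [Finsupp.coe_equivFunOnFinite_symm]
        exact dvd_mul_left (a i) (m i)
    · obtain ⟨l, hl⟩ := l
      simp only [hF, Finset.mem_filter, Finset.mem_finsuppAntidiag] at hl
      obtain ⟨⟨hsum, -⟩, hdvd⟩ := hl
      rw [← hsum]
      refine Finset.sum_congr rfl (fun i hi => ?_)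
      obtain ⟨c, hc⟩ := hdvd i
      show l i / a i * a i = l i
      rw [hc, Nat.mul_div_cancel_left _ (ha i), Nat.mul_comm]
    · intro m
      ext i
      simp [Nat.mul_div_cancel _ (ha i)]
    · intro l
      obtain ⟨l, hl⟩ := l
      simp only [hF, Finset.mem_filter, Finset.mem_finsuppAntidiag] at hl
      obtain ⟨⟨hsum, -⟩, hdvd⟩ := hl
      ext i
      simp only [Finsupp.coe_equivFunOnFinite_symm]
      obtain ⟨c, hc⟩ := hdvd i
      rw [hc, Nat.mul_div_cancel_left _ (ha i), Nat.mul_comm]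
  rw [this]

lemma genfun (n : ℕ) (a : Fin n → ℕ) (ha : ∀ i, 0 < a i) :
    (∏ i, (1 - PowerSeries.X ^ (a i))) *
      PowerSeries.mk (fun t => (restrictedPartition n a t : ℂ)) = 1 := by
  have hmk : PowerSeries.mk (fun t => (restrictedPartition n a t : ℂ)) = ∏ i, ind (a i) := by
    ext t
    rw [PowerSeries.coeff_mk, coeff_prod_ind n a ha]
  rw [hmk, ← Finset.prod_mul_distrib]
  rw [Finset.prod_congr rfl (fun i _ => invFactor (a i) (ha i))]
  exact Finset.prod_const_one

lemma coe_sum {α : Type*} (s : Finset α) (f : α → Polynomial ℂ) :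
    ((∑ x ∈ s, f x : Polynomial ℂ) : PowerSeries ℂ) = ∑ x ∈ s, ((f x : Polynomial ℂ) : PowerSeries ℂ) := by
  rw [← Polynomial.coeToPowerSeries.ringHom_apply, map_sum]
  rfl

lemma coe_prod {α : Type*} (s : Finset α) (f : α → Polynomial ℂ) :
    ((∏ x ∈ s, f x : Polynomial ℂ) : PowerSeries ℂ) = ∏ x ∈ s, ((f x : Polynomial ℂ) : PowerSeries ℂ) := by
  rw [← Polynomial.coeToPowerSeries.ringHom_apply, map_prod]
  rfl

end
end PolyPartAux

open PolyPartAux Polynomial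

/-- The coefficient of `t^{n-1-m}` in the polynomial part `P_A(t)` equals
`(-1)^m / ((n-1-m)! a_1⋯a_n)` times the coefficient of `z^m` in `B(a_1 z) ⋯ B(a_n z)`. -/
theorem polynomialPart_coeff_eq (n : ℕ) (hn : 0 < n) (a : Fin n → ℕ) (ha : ∀ i, 0 < a i)
    (m : ℕ) (hm : m ≤ n - 1)
    (P : ℂ → Polynomial ℂ)
    (hsupp : ∀ μ : ℂ, P μ ≠ 0 → ∃ i, μ ^ (a i) = 1)
    (hdecomp : ∀ t : ℕ, (restrictedPartition n a t : ℂ) =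
      ∑ᶠ μ : ℂ, (P μ).eval (t : ℂ) * μ ^ t) :
    (P 1).coeff (n - 1 - m) =
      (-1) ^ m / ((n - 1 - m).factorial * ∏ i, (a i : ℂ)) *
        PowerSeries.coeff (R := ℂ) m (∏ i, PowerSeries.rescale ((a i : ℂ)) bernoulliPS) := by
  classical
  -- the finite support superset
  set T : Finset ℂ :=
    (Finset.univ.biUnion fun i : Fin n => Polynomial.nthRootsFinset (a i) (1 : ℂ)) ∪ {1} with hT
  have h1T : (1 : ℂ) ∈ T := Finset.mem_union_right _ (Finset.mem_singleton_self 1)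
  have hsuppT : ∀ μ : ℂ, P μ ≠ 0 → μ ∈ T := by
    intro μ h
    obtain ⟨i, hi⟩ := hsupp μ h
    exact Finset.mem_union_left _ (Finset.mem_biUnion.2
      ⟨i, Finset.mem_univ i, (Polynomial.mem_nthRootsFinset (ha i) 1).2 hi⟩)
  set d : ℂ → ℕ := fun μ => (P μ).natDegree with hd
  set G : ℂ → PowerSeries ℂ := fun μ => PowerSeries.mk fun t => (P μ).eval (t:ℂ) * μ ^ t with hG
  set W : ℂ → Polynomial ℂ := fun μ => ∑ N ∈ Finset.range (d μ + 1),
      Polynomial.C ((P μ).coeff N) * ((1 - Polynomial.C μ * Polynomial.X) ^ (d μ - N) * Om μ N)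
    with hWdef
  -- Lemma: clearing the pole of G μ
  have hW : ∀ μ : ℂ, (((1 - Polynomial.C μ * Polynomial.X) ^ (d μ + 1) : Polynomial ℂ) :
      PowerSeries ℂ) * G μ = ((W μ : Polynomial ℂ) : PowerSeries ℂ) := by
    intro μ
    have hGsum : G μ = ∑ N ∈ Finset.range (d μ + 1),
        PowerSeries.C (R := ℂ) ((P μ).coeff N) * PowerSeries.mk (fun t => (t:ℂ) ^ N * μ ^ t) := by
      ext t
      rw [map_sum]
      simp only [hG, PowerSeries.coeff_mk, PowerSeries.coeff_C_mul]
      rw [Polynomial.eval_eq_sum_range, Finset.sum_mul]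
      exact Finset.sum_congr rfl fun N _ => by ring
    rw [hGsum, Finset.mul_sum]
    have hterm : ∀ N ∈ Finset.range (d μ + 1),
        (((1 - Polynomial.C μ * Polynomial.X) ^ (d μ + 1) : Polynomial ℂ) : PowerSeries ℂ) *
          (PowerSeries.C (R := ℂ) ((P μ).coeff N) * PowerSeries.mk (fun t => (t:ℂ) ^ N * μ ^ t))
        = PowerSeries.C (R := ℂ) ((P μ).coeff N) *
            ((((1 - Polynomial.C μ * Polynomial.X) ^ (d μ - N) : Polynomial ℂ) : PowerSeries ℂ) *
              ((Om μ N : Polynomial ℂ) : PowerSeries ℂ)) := by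
      intro N hN
      have hNle : N ≤ d μ := by
        have := Finset.mem_range.1 hN; omega
      have hsplit : (d μ + 1) = (d μ - N) + (N + 1) := by omega
      rw [hsplit, pow_add, Polynomial.coe_mul, ← OmW μ N]
      ring
    rw [Finset.sum_congr rfl hterm]
    show _ = ((W μ : Polynomial ℂ) : PowerSeries ℂ)
    rw [hWdef]
    simp only []
    rw [coe_sum]
    refine Finset.sum_congr rfl fun N _ => ?_
    rw [Polynomial.coe_mul, Polynomial.coe_mul, Polynomial.coe_C]
  -- decomposition of the generating series
  have hdec : PowerSeries.mk (fun t => (restrictedPartition n a t : ℂ)) = ∑ μ ∈ T, G μ := by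
    ext t
    rw [map_sum, PowerSeries.coeff_mk, hdecomp t]
    refine finsum_eq_sum_of_support_subset _ ?_ |>.trans
      (Finset.sum_congr rfl fun μ _ => by rw [hG, PowerSeries.coeff_mk])
    intro μ hμ
    simp only [Function.mem_support] at hμ
    by_contra hc
    have : P μ = 0 := by
      by_contra hne
      exact hc (hsuppT μ hne)
    rw [this] at hμ
    simp at hμ
  -- the master polynomial identity
  set Ap : Polynomial ℂ := ∏ i, (1 - Polynomial.X ^ (a i)) with hAp
  have hApcoe : ((Ap : Polynomial ℂ) : PowerSeries ℂ) = ∏ i, (1 - PowerSeries.X ^ (a i)) := by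
    rw [hAp, coe_prod]
    exact Finset.prod_congr rfl fun i _ => by
      rw [Polynomial.coe_sub, Polynomial.coe_pow, Polynomial.coe_X, Polynomial.coe_one]
  set Rp : Polynomial ℂ := ∏ μ ∈ T, (1 - Polynomial.C μ * Polynomial.X) ^ (d μ + 1) with hRp
  set Wt : Polynomial ℂ := ∑ μ ∈ T,
      (∏ ν ∈ T.erase μ, (1 - Polynomial.C ν * Polynomial.X) ^ (d ν + 1)) * W μ with hWt
  have hgen2 : ((Ap : Polynomial ℂ) : PowerSeries ℂ) *
      PowerSeries.mk (fun t => (restrictedPartition n a t : ℂ)) = 1 := by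
    rw [hApcoe]; exact genfun n a ha
  have hRpG : ((Rp : Polynomial ℂ) : PowerSeries ℂ) * (∑ μ ∈ T, G μ)
      = ((Wt : Polynomial ℂ) : PowerSeries ℂ) := by
    rw [Finset.mul_sum, hWt, coe_sum]
    refine Finset.sum_congr rfl fun μ hμ => ?_
    rw [Polynomial.coe_mul, ← hW μ]
    have hsplitRp : (Rp : Polynomial ℂ) = (1 - Polynomial.C μ * Polynomial.X) ^ (d μ + 1) *
        ∏ ν ∈ T.erase μ, (1 - Polynomial.C ν * Polynomial.X) ^ (d ν + 1) :=
      (Finset.mul_prod_erase T _ hμ).symm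
    rw [hsplitRp, Polynomial.coe_mul]
    ring
  have hMaster : Rp = Ap * Wt := by
    apply (Polynomial.coe_inj).1
    rw [Polynomial.coe_mul]
    calc ((Rp : Polynomial ℂ) : PowerSeries ℂ)
        = ((Rp : Polynomial ℂ) : PowerSeries ℂ) * (((Ap : Polynomial ℂ) : PowerSeries ℂ) *
            PowerSeries.mk (fun t => (restrictedPartition n a t : ℂ))) := by
          rw [hgen2, mul_one]
      _ = ((Ap : Polynomial ℂ) : PowerSeries ℂ) * (((Rp : Polynomial ℂ) : PowerSeries ℂ) *
            (∑ μ ∈ T, G μ)) := by rw [hdec]; ring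
      _ = ((Ap : Polynomial ℂ) : PowerSeries ℂ) * ((Wt : Polynomial ℂ) : PowerSeries ℂ) := by
          rw [hRpG]
  clear hRpG hgen2 hdec hW hdecomp hsupp
  -- now map through `aeval w0`
  set e : Polynomial ℂ →ₐ[ℂ] PowerSeries ℂ := Polynomial.aeval w0 with he
  have hCmap : ∀ c : ℂ, e (Polynomial.C c) = PowerSeries.C (R := ℂ) c := by
    intro c
    rw [he, Polynomial.aeval_C]
    simp [PowerSeries.algebraMap_apply]
  have heLin : ∀ μ : ℂ, e (1 - Polynomial.C μ * Polynomial.X) = 1 - PowerSeries.C (R := ℂ) μ * w0 := by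
    intro μ
    rw [map_sub, map_one, map_mul, hCmap, he, Polynomial.aeval_X]
  have he1 : e (1 - Polynomial.C 1 * Polynomial.X) = PowerSeries.X * v0 := by
    rw [heLin, map_one, one_mul, X_mul_v0]
  set R' : Polynomial ℂ := ∏ ν ∈ T.erase 1, (1 - Polynomial.C ν * Polynomial.X) ^ (d ν + 1)
    with hR'
  have heRp : e Rp = (PowerSeries.X * v0) ^ (d 1 + 1) * e R' := by
    rw [show Rp = (1 - Polynomial.C 1 * Polynomial.X) ^ (d 1 + 1) * R' from
      (Finset.mul_prod_erase T _ h1T).symm]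
    rw [map_mul, map_pow, he1]
  set π : ℂ := ∏ i, (a i : ℂ) with hπ
  have hπne : π ≠ 0 := by
    rw [hπ]
    refine Finset.prod_ne_zero_iff.2 fun i _ => ?_
    exact_mod_cast (ha i).ne'
  set Vbig : PowerSeries ℂ := ∏ i, PowerSeries.rescale ((a i : ℂ)) v0 with hVbig
  have hw0pow : ∀ k : ℕ, w0 ^ k = PowerSeries.rescale (-(k:ℂ)) (PowerSeries.exp ℂ) := by
    intro k
    rw [w0_def, ← map_pow, PowerSeries.exp_pow_eq_rescale_exp, PowerSeries.rescale_rescale]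
    norm_num
  have hufac : ∀ k : ℕ, (1 : PowerSeries ℂ) - w0 ^ k
      = (PowerSeries.C (R := ℂ) (k:ℂ) * PowerSeries.X) * PowerSeries.rescale (k:ℂ) v0 := by
    intro k
    have h1 := congrArg (PowerSeries.rescale ((k:ℕ):ℂ)) X_mul_v0
    rw [map_sub, map_one, map_mul, PowerSeries.rescale_X] at h1
    rw [h1, hw0pow k]
    have h2 : PowerSeries.rescale ((k:ℂ)) w0 = PowerSeries.rescale (-(k:ℂ)) (PowerSeries.exp ℂ) := by
      rw [w0_def, PowerSeries.rescale_rescale]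
      norm_num
    rw [h2]
  have heAp : e Ap = PowerSeries.C (R := ℂ) π * PowerSeries.X ^ n * Vbig := by
    have h2 : e Ap = ∏ i, ((1:PowerSeries ℂ) - w0 ^ (a i)) := by
      rw [hAp, map_prod]
      refine Finset.prod_congr rfl fun i _ => ?_
      rw [map_sub, map_one, map_pow, he, Polynomial.aeval_X]
    rw [h2, Finset.prod_congr rfl fun i _ => hufac (a i)]
    rw [Finset.prod_mul_distrib, Finset.prod_mul_distrib, hVbig, hπ, map_prod]
    rw [Finset.prod_const, Finset.card_univ, Fintype.card_fin]
  -- expansion of e (W 1)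
  set c : ℕ → ℂ := fun N => (P 1).coeff N with hc
  set ρf : ℕ → PowerSeries ℂ := fun N => Classical.choose (OmM N) with hρf
  have hOmM : ∀ N : ℕ, Polynomial.aeval w0 (Om 1 N) = v0 ^ (N+1) *
      (PowerSeries.C (R := ℂ) (N.factorial : ℂ) + PowerSeries.X ^ (N+1) * ρf N) :=
    fun N => Classical.choose_spec (OmM N)
  set Sig : PowerSeries ℂ := ∑ N ∈ Finset.range (d 1 + 1),
      PowerSeries.C (R := ℂ) (c N) * (PowerSeries.C (R := ℂ) (N.factorial : ℂ) * PowerSeries.X ^ (d 1 - N)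
        + PowerSeries.X ^ (d 1 + 1) * ρf N) with hSig
  have heW1 : e (W 1) = v0 ^ (d 1 + 1) * Sig := by
    rw [hWdef]
    simp only []
    rw [map_sum, hSig, Finset.mul_sum]
    refine Finset.sum_congr rfl fun N hN => ?_
    have hNle : N ≤ d 1 := by have := Finset.mem_range.1 hN; omega
    rw [map_mul, map_mul, hCmap, map_pow, he1]
    have hOm1 : e (Om 1 N) = v0 ^ (N+1) *
        (PowerSeries.C (R := ℂ) (N.factorial : ℂ) + PowerSeries.X ^ (N+1) * ρf N) := hOmM N
    rw [hOm1, mul_pow]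
    have hexp : (PowerSeries.X : PowerSeries ℂ) ^ (d 1 - N) * PowerSeries.X ^ (N + 1)
        = PowerSeries.X ^ (d 1 + 1) := by
      rw [← pow_add]
      congr 1
      omega
    have hexp2 : v0 ^ (d 1 - N) * v0 ^ (N + 1) = v0 ^ (d 1 + 1) := by
      rw [← pow_add]
      congr 1
      omega
    calc PowerSeries.C (R := ℂ) ((P 1).coeff N) * (PowerSeries.X ^ (d 1 - N) * v0 ^ (d 1 - N) *
            (v0 ^ (N+1) * (PowerSeries.C (R := ℂ) (N.factorial : ℂ) + PowerSeries.X ^ (N+1) * ρf N)))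
        = (v0 ^ (d 1 - N) * v0 ^ (N+1)) * (PowerSeries.C (R := ℂ) (c N) *
            (PowerSeries.C (R := ℂ) (N.factorial : ℂ) * PowerSeries.X ^ (d 1 - N)
              + (PowerSeries.X ^ (d 1 - N) * PowerSeries.X ^ (N+1)) * ρf N)) := by ring
      _ = v0 ^ (d 1 + 1) * (PowerSeries.C (R := ℂ) (c N) *
            (PowerSeries.C (R := ℂ) (N.factorial : ℂ) * PowerSeries.X ^ (d 1 - N)
              + PowerSeries.X ^ (d 1 + 1) * ρf N)) := by rw [hexp, hexp2]
  -- the coefficients of Sig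
  have hSigcoeff : ∀ j : ℕ, j ≤ d 1 → PowerSeries.coeff (R := ℂ) j Sig
      = ((d 1 - j).factorial : ℂ) * c (d 1 - j) := by
    intro j hj
    rw [hSig, map_sum]
    rw [Finset.sum_eq_single (d 1 - j)]
    · rw [PowerSeries.coeff_C_mul, map_add, PowerSeries.coeff_C_mul, PowerSeries.coeff_X_pow]
      rw [if_pos (by omega : j = d 1 - (d 1 - j))]
      rw [PowerSeries.coeff_X_pow_mul']
      rw [if_neg (by omega : ¬ (d 1 + 1 ≤ j))]
      ring
    · intro N hN hne
      rw [PowerSeries.coeff_C_mul, map_add, PowerSeries.coeff_C_mul, PowerSeries.coeff_X_pow]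
      have hNle : N ≤ d 1 := by have := Finset.mem_range.1 hN; omega
      rw [if_neg (by omega : ¬ (j = d 1 - N))]
      rw [PowerSeries.coeff_X_pow_mul', if_neg (by omega : ¬ (d 1 + 1 ≤ j))]
      ring
    · intro hnotin
      exact absurd (Finset.mem_range.2 (by omega)) hnotin
  -- split e Wt
  set rrest : PowerSeries ℂ := ∑ μ ∈ T.erase 1,
      e (∏ ν ∈ (T.erase μ).erase 1, (1 - Polynomial.C ν * Polynomial.X) ^ (d ν + 1)) * e (W μ)
    with hrrest
  have heWt : e Wt = (PowerSeries.X * v0) ^ (d 1 + 1) * rrest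
      + e R' * (v0 ^ (d 1 + 1) * Sig) := by
    rw [hWt, map_sum, ← Finset.sum_erase_add T _ h1T]
    congr 1
    · rw [hrrest, Finset.mul_sum]
      refine Finset.sum_congr rfl fun μ hμ => ?_
      have hμne : μ ≠ 1 := (Finset.mem_erase.1 hμ).1
      have h1mem : (1:ℂ) ∈ T.erase μ :=
        Finset.mem_erase.2 ⟨fun h => hμne h.symm, h1T⟩
      rw [map_mul]
      rw [show (∏ ν ∈ T.erase μ, (1 - Polynomial.C ν * Polynomial.X) ^ (d ν + 1))
          = (1 - Polynomial.C 1 * Polynomial.X) ^ (d 1 + 1) *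
            ∏ ν ∈ (T.erase μ).erase 1, (1 - Polynomial.C ν * Polynomial.X) ^ (d ν + 1) from
        (Finset.mul_prod_erase _ _ h1mem).symm]
      rw [map_mul, map_pow, he1]
      ring
    · rw [map_mul, heW1]
  -- cancel v0 ^ (d 1 + 1)
  have hv0ne : v0 ≠ 0 := fun h => by
    have h2 := constCoeff_v0
    rw [h] at h2
    simp at h2
  have hEQ1 : PowerSeries.X ^ (d 1 + 1) * e R' = PowerSeries.C (R := ℂ) π * PowerSeries.X ^ n *
      Vbig * (PowerSeries.X ^ (d 1 + 1) * rrest + e R' * Sig) := by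
    have hE : e Rp = e Ap * e Wt := by rw [hMaster, map_mul]
    rw [heRp, heAp, heWt] at hE
    apply mul_left_cancel₀ (pow_ne_zero (d 1 + 1) hv0ne)
    rw [mul_pow] at hE
    linear_combination hE
  clear heWt heRp heAp hMaster heW1
  -- constant coefficients
  have heR'const : PowerSeries.constantCoeff (R := ℂ) (e R') ≠ 0 := by
    rw [he]
    rw [constCoeff_aeval, constCoeff_w0, hR']
    rw [Polynomial.eval_prod]
    refine Finset.prod_ne_zero_iff.2 fun ν hν => ?_
    rw [Polynomial.eval_pow]
    apply pow_ne_zero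
    rw [Polynomial.eval_sub, Polynomial.eval_one, Polynomial.eval_mul, Polynomial.eval_C,
      Polynomial.eval_X, mul_one]
    exact sub_ne_zero.2 (Ne.symm (Finset.mem_erase.1 hν).1)
  have hVbigconst : PowerSeries.constantCoeff (R := ℂ) Vbig = 1 := by
    rw [hVbig, map_prod]
    refine Finset.prod_eq_one fun i _ => ?_
    rw [← PowerSeries.coeff_zero_eq_constantCoeff, PowerSeries.coeff_rescale]
    rw [pow_zero, one_mul, PowerSeries.coeff_zero_eq_constantCoeff, constCoeff_v0]
  -- P 1 is nonzero
  have hP1ne : P 1 ≠ 0 := by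
    intro h0
    have hSig0 : Sig = 0 := by
      rw [hSig]
      refine Finset.sum_eq_zero fun N _ => ?_
      have : c N = 0 := by rw [hc]; simp [h0]
      rw [this]
      simp
    rw [hSig0] at hEQ1
    have h1 := congrArg (PowerSeries.coeff (R := ℂ) (d 1 + 1)) hEQ1
    have hXL : PowerSeries.coeff (R := ℂ) (d 1 + 1) (PowerSeries.X ^ (d 1 + 1) * e R')
        = PowerSeries.constantCoeff (R := ℂ) (e R') := by
      have h2 := PowerSeries.coeff_X_pow_mul (e R') (d 1 + 1) 0
      rw [zero_add] at h2
      rw [h2, PowerSeries.coeff_zero_eq_constantCoeff]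
    rw [hXL] at h1
    have hrw : PowerSeries.C (R := ℂ) π * PowerSeries.X ^ n * Vbig *
        (PowerSeries.X ^ (d 1 + 1) * rrest + e R' * 0)
        = PowerSeries.X ^ (n + (d 1 + 1)) * (PowerSeries.C (R := ℂ) π * Vbig * rrest) := by
      rw [pow_add]; ring
    rw [hrw, PowerSeries.coeff_X_pow_mul'] at h1
    rw [if_neg (by omega : ¬ (n + (d 1 + 1) ≤ d 1 + 1))] at h1
    exact heR'const h1
  have hSig0ne : PowerSeries.constantCoeff (R := ℂ) Sig ≠ 0 := by
    rw [← PowerSeries.coeff_zero_eq_constantCoeff, hSigcoeff 0 (Nat.zero_le _)]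
    apply mul_ne_zero
    · exact_mod_cast Nat.factorial_ne_zero _
    · rw [Nat.sub_zero, hc]
      exact Polynomial.leadingCoeff_ne_zero.2 hP1ne
  -- conclude d 1 + 1 = n
  set H : PowerSeries ℂ := PowerSeries.C (R := ℂ) π * Vbig *
      (PowerSeries.X ^ (d 1 + 1) * rrest + e R' * Sig) with hH
  have hEQ1' : PowerSeries.X ^ (d 1 + 1) * e R' = PowerSeries.X ^ n * H := by
    rw [hEQ1, hH]; ring
  have hHconst : PowerSeries.constantCoeff (R := ℂ) H ≠ 0 := by
    rw [hH]
    rw [map_mul, map_mul, map_add, map_mul, map_mul]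
    rw [PowerSeries.constantCoeff_C, hVbigconst]
    rw [show PowerSeries.constantCoeff (R := ℂ) (PowerSeries.X ^ (d 1 + 1)) = 0 from by
      rw [map_pow, PowerSeries.constantCoeff_X, zero_pow (by omega)]]
    rw [zero_mul, zero_add, mul_one]
    exact mul_ne_zero hπne (mul_ne_zero heR'const hSig0ne)
  have hdn : d 1 + 1 = n := by
    rcases lt_trichotomy (d 1 + 1) n with hlt | heq | hgt
    · exfalso
      have h1 := congrArg (PowerSeries.coeff (R := ℂ) (d 1 + 1)) hEQ1'
      have hXL : PowerSeries.coeff (R := ℂ) (d 1 + 1) (PowerSeries.X ^ (d 1 + 1) * e R')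
          = PowerSeries.constantCoeff (R := ℂ) (e R') := by
        have h2 := PowerSeries.coeff_X_pow_mul (e R') (d 1 + 1) 0
        rw [zero_add] at h2
        rw [h2, PowerSeries.coeff_zero_eq_constantCoeff]
      rw [hXL, PowerSeries.coeff_X_pow_mul', if_neg (by omega : ¬ (n ≤ d 1 + 1))] at h1
      exact heR'const h1
    · exact heq
    · exfalso
      have h1 := congrArg (PowerSeries.coeff (R := ℂ) n) hEQ1'
      have hXR : PowerSeries.coeff (R := ℂ) n (PowerSeries.X ^ n * H)
          = PowerSeries.constantCoeff (R := ℂ) H := by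
        have h2 := PowerSeries.coeff_X_pow_mul H n 0
        rw [zero_add] at h2
        rw [h2, PowerSeries.coeff_zero_eq_constantCoeff]
      rw [hXR, PowerSeries.coeff_X_pow_mul', if_neg (by omega : ¬ (d 1 + 1 ≤ n))] at h1
      exact hHconst h1.symm
  -- cancel X ^ n
  have hEQ2 : e R' = PowerSeries.C (R := ℂ) π * Vbig *
      (PowerSeries.X ^ n * rrest + e R' * Sig) := by
    apply mul_left_cancel₀ (pow_ne_zero n (PowerSeries.X_ne_zero (R := ℂ)))
    rw [hdn] at hEQ1
    linear_combination hEQ1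
  -- bring in the Bernoulli product
  set Bp : PowerSeries ℂ := ∏ i, PowerSeries.rescale ((a i : ℂ)) bernoulliPS with hBp
  set Bneg : PowerSeries ℂ := PowerSeries.rescale (-1 : ℂ) Bp with hBneg
  have hBV : Bneg * Vbig = 1 := by
    rw [hBneg, hBp, map_prod, hVbig, ← Finset.prod_mul_distrib]
    refine Finset.prod_eq_one fun i _ => ?_
    rw [PowerSeries.rescale_rescale]
    rw [show ((a i : ℂ) * -1) = -(a i : ℂ) from by ring]
    exact resB_mul_resv0 _
  set Psi : PowerSeries ℂ := PowerSeries.C (R := ℂ) π * Sig - Bneg with hPsi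
  have hEQ3 : e R' * Psi = PowerSeries.X ^ n * (-(PowerSeries.C (R := ℂ) π * rrest)) := by
    rw [hPsi]
    linear_combination -Bneg * hEQ2 - (PowerSeries.C (R := ℂ) π * PowerSeries.X ^ n * rrest
      + PowerSeries.C (R := ℂ) π * (e R') * Sig) * hBV
  -- coefficients of Psi below n vanish
  have hPsiCoeff : ∀ j : ℕ, j < n → PowerSeries.coeff (R := ℂ) j Psi = 0 := by
    intro j
    induction j using Nat.strong_induction_on with
    | _ j IH =>
      intro hj
      have h1 := congrArg (PowerSeries.coeff (R := ℂ) j) hEQ3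
      rw [PowerSeries.coeff_X_pow_mul', if_neg (by omega : ¬ (n ≤ j))] at h1
      rw [PowerSeries.coeff_mul] at h1
      rw [Finset.sum_eq_single (0, j)] at h1
      · rw [PowerSeries.coeff_zero_eq_constantCoeff] at h1
        exact (mul_eq_zero.1 h1).resolve_left heR'const
      · intro p hp hne
        have hpsum := Finset.HasAntidiagonal.mem_antidiagonal.1 hp
        have hp2 : p.2 < j := by
          rcases Nat.lt_or_ge p.2 j with h | h
          · exact h
          · exfalso
            apply hne
            have : p.2 = j := by omega
            have : p.1 = 0 := by omega
            ext
            · exact this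
            · omega
        rw [IH p.2 hp2 (by omega), mul_zero]
      · intro hnotin
        exact absurd (Finset.HasAntidiagonal.mem_antidiagonal.2 (by omega)) hnotin
  -- final extraction
  have hd1 : d 1 = n - 1 := by omega
  have hmn : m < n := by omega
  have hfin := hPsiCoeff m hmn
  rw [hPsi, map_sub, PowerSeries.coeff_C_mul, hSigcoeff m (by omega : m ≤ d 1)] at hfin
  rw [hBneg, PowerSeries.coeff_rescale] at hfin
  rw [hd1] at hfin
  have hKfac : (((n - 1 - m).factorial : ℂ)) ≠ 0 := by
    exact_mod_cast Nat.factorial_ne_zero _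
  rw [sub_eq_zero] at hfin
  rw [show c (n - 1 - m) = (P 1).coeff (n - 1 - m) from rfl] at hfin
  field_simp
  linear_combination hfin
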